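/- For every (x,y,z) ∈ ℝ³ with x² + y² ≤ z and z > 0, the curve X(t) = (x·(z²-4t)^{1/4}/√z, y·(z²-4t)^{1/4}/√z, √(z²-4t)) defined for 0 ≤ t < z²/4 satisfies X(0) = (x,y,z) and X'(t) = b(X(t)) for all 0 < t < z²/4, where b(u,v,w) = (-u/w², -v/w², -2/w) for w > 0. Moreover X(t) → (0,0,0) as t → z²/4. -/

import Mathlib

open Real Filter

/-- On the upper paraboloid the explicit curve
`X(t) = (x(z²-4t)^{1/4}/√z, y(z²-4t)^{1/4}/√z, √(z²-4t))`, `0 ≤ t < z²/4`,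
starts at `(x,y,z)`, solves `X' = b(X)` with `b(u,v,w) = (-u/w², -v/w², -2/w)`,
and tends to the origin as `t → z²/4`. -/
theorem flow_upper_paraboloid (x y z : ℝ) (hz : 0 < z) (hP : x ^ 2 + y ^ 2 ≤ z) :
    (fun t : ℝ => ((x / Real.sqrt z * (z ^ 2 - 4 * t) ^ ((1 : ℝ) / 4),
        y / Real.sqrt z * (z ^ 2 - 4 * t) ^ ((1 : ℝ) / 4),
        Real.sqrt (z ^ 2 - 4 * t)) : ℝ × ℝ × ℝ)) 0 = (x, y, z) ∧
    (∀ t : ℝ, 0 < t → t < z ^ 2 / 4 →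
      HasDerivAt (fun t : ℝ => ((x / Real.sqrt z * (z ^ 2 - 4 * t) ^ ((1 : ℝ) / 4),
          y / Real.sqrt z * (z ^ 2 - 4 * t) ^ ((1 : ℝ) / 4),
          Real.sqrt (z ^ 2 - 4 * t)) : ℝ × ℝ × ℝ))
        ((-(x / Real.sqrt z * (z ^ 2 - 4 * t) ^ ((1 : ℝ) / 4)) /
            Real.sqrt (z ^ 2 - 4 * t) ^ 2,
          -(y / Real.sqrt z * (z ^ 2 - 4 * t) ^ ((1 : ℝ) / 4)) /
            Real.sqrt (z ^ 2 - 4 * t) ^ 2,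
          -2 / Real.sqrt (z ^ 2 - 4 * t))) t) ∧
    Tendsto (fun t : ℝ => ((x / Real.sqrt z * (z ^ 2 - 4 * t) ^ ((1 : ℝ) / 4),
        y / Real.sqrt z * (z ^ 2 - 4 * t) ^ ((1 : ℝ) / 4),
        Real.sqrt (z ^ 2 - 4 * t)) : ℝ × ℝ × ℝ))
      (nhdsWithin (z ^ 2 / 4) (Set.Iio (z ^ 2 / 4))) (nhds ((0, 0, 0) : ℝ × ℝ × ℝ)) := by
  have hzs : Real.sqrt z ≠ 0 := (Real.sqrt_pos.2 hz).ne'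
  refine ⟨?_, ?_, ?_⟩
  · have h14 : (z ^ 2 : ℝ) ^ ((1 : ℝ) / 4) = Real.sqrt z := by
      rw [← Real.rpow_natCast z 2, ← Real.rpow_mul hz.le]
      rw [show ((2 : ℕ) : ℝ) * (1 / 4) = 1 / 2 by norm_num, ← Real.sqrt_eq_rpow]
    simp only [mul_zero, sub_zero, h14]
    rw [div_mul_cancel₀ _ hzs, div_mul_cancel₀ _ hzs, Real.sqrt_sq hz.le]
  · intro t ht0 ht1
    have hs : 0 < z ^ 2 - 4 * t := by nlinarith
    have hlin : HasDerivAt (fun t : ℝ => z ^ 2 - 4 * t) (-4) t := by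
      simpa using (((hasDerivAt_id t).const_mul 4).const_sub (z ^ 2))
    have hrpow : HasDerivAt (fun t : ℝ => (z ^ 2 - 4 * t) ^ ((1 : ℝ) / 4))
        ((1 / 4) * (z ^ 2 - 4 * t) ^ ((1 : ℝ) / 4 - 1) * (-4)) t := by
      have := (hlin.rpow_const (p := (1 : ℝ) / 4) (Or.inl hs.ne'))
      simpa [mul_comm, mul_assoc, mul_left_comm] using this
    have hsqrt : HasDerivAt (fun t : ℝ => Real.sqrt (z ^ 2 - 4 * t))
        (-2 / Real.sqrt (z ^ 2 - 4 * t)) t := by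
      have := hlin.sqrt hs.ne'
      have hsq : Real.sqrt (z ^ 2 - 4 * t) ≠ 0 := (Real.sqrt_pos.2 hs).ne'
      convert this using 1
      field_simp
      ring
    have key : ∀ c : ℝ, (c * ((1 / 4) * (z ^ 2 - 4 * t) ^ ((1 : ℝ) / 4 - 1) * (-4)))
        = -(c * (z ^ 2 - 4 * t) ^ ((1 : ℝ) / 4)) / Real.sqrt (z ^ 2 - 4 * t) ^ 2 := by
      intro c
      rw [Real.sq_sqrt hs.le]
      rw [Real.rpow_sub hs, Real.rpow_one]
      field_simp
    exact ((hrpow.const_mul (x / Real.sqrt z)).prodMk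
      (((hrpow.const_mul (y / Real.sqrt z)).prodMk hsqrt))).congr_deriv
      (by rw [← key, ← key])
  · have hbase : Tendsto (fun t : ℝ => z ^ 2 - 4 * t)
        (nhdsWithin (z ^ 2 / 4) (Set.Iio (z ^ 2 / 4))) (nhds 0) :=
      ((continuous_const.sub (continuous_const.mul continuous_id)).tendsto' _ _
        (by simp [id]; ring)).mono_left nhdsWithin_le_nhds
    have hr : Tendsto (fun t : ℝ => (z ^ 2 - 4 * t) ^ ((1 : ℝ) / 4))
        (nhdsWithin (z ^ 2 / 4) (Set.Iio (z ^ 2 / 4))) (nhds 0) := by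
      have hc : ContinuousAt (fun s : ℝ => s ^ ((1 : ℝ) / 4)) 0 :=
        Real.continuousAt_rpow_const 0 _ (Or.inr (by norm_num))
      have := hc.tendsto.comp hbase
      simpa [Function.comp_def, Real.zero_rpow (by norm_num : ((1 : ℝ) / 4) ≠ 0)] using this
    have hsq : Tendsto (fun t : ℝ => Real.sqrt (z ^ 2 - 4 * t))
        (nhdsWithin (z ^ 2 / 4) (Set.Iio (z ^ 2 / 4))) (nhds 0) := by
      have := (Real.continuous_sqrt.continuousAt (x := (0:ℝ))).tendsto.comp hbase
      simpa [Function.comp_def] using this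
    have h1 := hr.const_mul (x / Real.sqrt z)
    have h2 := hr.const_mul (y / Real.sqrt z)
    rw [mul_zero] at h1 h2
    exact h1.prodMk_nhds (h2.prodMk_nhds hsq)
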